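/- Let F : ℝ² → ℝ² be a lift of a homeomorphism f of the two-torus homotopic to the identity, U ⊆ T², and M ∈ SL(2,ℤ) with induced torus automorphism g_M; set f̃ = g_M⁻¹∘f∘g_M with lift F̃ = M⁻¹∘F∘M. If ρ_U(F) ⊆ L_{λ,v} for some λ ∈ ℝ and v ∈ ℝ² \ {0}, then ρ_{g_M⁻¹(U)}(F̃) ⊆ M⁻¹(L_{λ,v}) = L_{λ̃,ṽ}, where ṽ = Mᵀv and λ̃ = λ‖v‖²/‖ṽ‖². Moreover, for all n ∈ ℕ and z, ρ ∈ ℝ²: ⟨F^n(z) − z − nρ, v⟩ = ⟨F̃^n(M⁻¹z) − M⁻¹z − n M⁻¹ρ, ṽ⟩. -/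

import Mathlib

noncomputable section
open Filter Topology Metric Set MeasureTheory

/-- Euclidean space `ℝ^d`. -/
abbrev E (d : ℕ) := EuclideanSpace ℝ (Fin d)

/-- The integer lattice `ℤ^d` as an additive subgroup of `ℝ^d`. -/
def ZLat (d : ℕ) : AddSubgroup (E d) where
  carrier := {z | ∀ i, ∃ m : ℤ, z i = (m : ℝ)}
  zero_mem' := fun i => ⟨0, by simp⟩
  add_mem' := by
    intro x y hx hy i
    obtain ⟨m, hm⟩ := hx i
    obtain ⟨n, hn⟩ := hy i
    exact ⟨m + n, by simp [PiLp.add_apply, hm, hn]⟩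
  neg_mem' := by
    intro x hx i
    obtain ⟨m, hm⟩ := hx i
    exact ⟨-m, by simp [PiLp.neg_apply, hm]⟩

/-- The torus `T^d = ℝ^d / ℤ^d`. -/
abbrev T (d : ℕ) := E d ⧸ ZLat d

/-- The canonical projection `π : ℝ^d → T^d`. -/
def tpi (d : ℕ) : E d → T d := QuotientAddGroup.mk

/-- The set of rotation vectors of orbit segments starting in `W ⊆ ℝ^d`:
`{ρ | ∃ nᵢ → ∞, zᵢ ∈ W, (F^{nᵢ}(zᵢ) - zᵢ)/nᵢ → ρ}`. -/
def rotRel {d : ℕ} (F : E d → E d) (W : Set (E d)) : Set (E d) :=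
  {ρ | ∃ (n : ℕ → ℕ) (z : ℕ → E d),
    Tendsto n atTop atTop ∧ (∀ i, z i ∈ W) ∧
    Tendsto (fun i => (n i : ℝ)⁻¹ • (F^[n i] (z i) - z i)) atTop (𝓝 ρ)}

/-- The Misiurewicz–Ziemian rotation set `ρ(F)` of a lift `F`. -/
def rotSet {d : ℕ} (F : E d → E d) : Set (E d) := rotRel F Set.univ

/-- The rotation subset `ρ_U(F)` for `U ⊆ T^d` (starting points in `π⁻¹(U)`). -/
def rotU {d : ℕ} (F : E d → E d) (U : Set (T d)) : Set (E d) :=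
  rotRel F (tpi d ⁻¹' U)

/-- `F` is a lift of the torus homeomorphism `f` (which is then homotopic to the
identity, as expressed by commutation with the deck translations). -/
def IsLift {d : ℕ} (F : E d ≃ₜ E d) (f : T d ≃ₜ T d) : Prop :=
  (∀ z : E d, tpi d (F z) = f (tpi d z)) ∧ ∀ z : E d, ∀ m ∈ ZLat d, F (z + m) = F z + m

/-- `U ⊆ T^d` is bounded: the connected components of `π⁻¹(U)` are bounded. -/
def BoundedSet {d : ℕ} (U : Set (T d)) : Prop :=
  ∀ z ∈ tpi d ⁻¹' U, Bornology.IsBounded (connectedComponentIn (tpi d ⁻¹' U) z)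

/-- `U ⊆ T^d` is recurrent: `f^n(U) ∩ U ≠ ∅` for infinitely many `n ≥ 1`. -/
def Recurrent {d : ℕ} (f : T d ≃ₜ T d) (U : Set (T d)) : Prop :=
  {n : ℕ | 1 ≤ n ∧ ((⇑f)^[n] '' U ∩ U).Nonempty}.Infinite

/-- The Euclidean scalar product `⟨z, v⟩` in `ℝ²`. -/
def sdot (v z : E 2) : ℝ := z 0 * v 0 + z 1 * v 1

/-- `⟨z, v^⊥⟩` where `v^⊥ = (-v₂, v₁)`. -/
def pdot (v z : E 2) : ℝ := z 1 * v 0 - z 0 * v 1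

/-- The affine line `L_{λ,v} = λv + {v}^⊥ = {z | ⟨z,v⟩ = λ⟨v,v⟩}`. -/
def lineL (lam : ℝ) (v : E 2) : Set (E 2) := {z | sdot v z = lam * sdot v v}

/-- A vector of `ℝ²` is rational if both coordinates are rational. -/
def RatVec (z : E 2) : Prop := (∃ q : ℚ, z 0 = (q : ℝ)) ∧ ∃ q : ℚ, z 1 = (q : ℝ)

/-- The linear action of an integer matrix on `ℝ²`. -/
def mulV (M : Matrix (Fin 2) (Fin 2) ℤ) (z : E 2) : E 2 :=
  (WithLp.equiv 2 (Fin 2 → ℝ)).symm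
    ((M.map (Int.cast : ℤ → ℝ)).mulVec (WithLp.equiv 2 (Fin 2 → ℝ) z))

lemma mulV_apply (M : Matrix (Fin 2) (Fin 2) ℤ) (z : E 2) (i : Fin 2) :
    mulV M z i = (M i 0 : ℝ) * z 0 + (M i 1 : ℝ) * z 1 := by
  simp [mulV, Matrix.mulVec, dotProduct, Fin.sum_univ_two, Matrix.map_apply]
  fin_cases i <;> simp

lemma mulV_add (M : Matrix (Fin 2) (Fin 2) ℤ) (x y : E 2) :
    mulV M (x + y) = mulV M x + mulV M y := by
  ext i; simp [mulV_apply, PiLp.add_apply]; ring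

lemma mulV_smul (M : Matrix (Fin 2) (Fin 2) ℤ) (c : ℝ) (x : E 2) :
    mulV M (c • x) = c • mulV M x := by
  ext i; simp [mulV_apply, PiLp.smul_apply, smul_eq_mul]; ring

lemma mulV_sub (M : Matrix (Fin 2) (Fin 2) ℤ) (x y : E 2) :
    mulV M (x - y) = mulV M x - mulV M y := by
  ext i; simp [mulV_apply, PiLp.sub_apply]; ring

lemma mulV_mulV (M N : Matrix (Fin 2) (Fin 2) ℤ) (z : E 2) :
    mulV M (mulV N z) = mulV (M * N) z := by
  ext i; fin_cases i <;>
    simp [mulV_apply, Matrix.mul_apply, Fin.sum_univ_two] <;> ring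

lemma mulV_one (z : E 2) : mulV 1 z = z := by
  ext i; fin_cases i <;> simp [mulV_apply, Matrix.one_apply]

def mulVL (M : Matrix (Fin 2) (Fin 2) ℤ) : E 2 →ₗ[ℝ] E 2 where
  toFun := mulV M
  map_add' := mulV_add M
  map_smul' := mulV_smul M

lemma mulV_cont (M : Matrix (Fin 2) (Fin 2) ℤ) : Continuous (mulV M) :=
  (mulVL M).continuous_of_finiteDimensional

lemma sdot_mulV (M : Matrix (Fin 2) (Fin 2) ℤ) (v z : E 2) :
    sdot v (mulV M z) = sdot (mulV M.transpose v) z := by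
  simp [sdot, mulV_apply, Matrix.transpose_apply]; ring

lemma sdot_self (v : E 2) : sdot v v = ‖v‖ ^ 2 := by
  rw [EuclideanSpace.norm_eq, Real.sq_sqrt (by positivity)]
  simp [sdot, Fin.sum_univ_two]; ring

/-- **Reduction Lemma, part (b).**
If `ρ_U(F) ⊆ L_{λ,v}` then `ρ_{g_M⁻¹(U)}(F̃) ⊆ M⁻¹(L_{λ,v}) = L_{λ̃,ṽ}` with
`ṽ = M.transposev` and `λ̃ = λ‖v‖²/‖ṽ‖²`; moreover the deviations satisfy
`D^v_{f,n}(z,ρ) = D^{ṽ}_{f̃,n}(M⁻¹z, M⁻¹ρ)`. -/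
theorem reduction_lemma_line
    (F : E 2 ≃ₜ E 2) (f : T 2 ≃ₜ T 2) (hlift : IsLift F f)
    (U : Set (T 2))
    (M N : Matrix (Fin 2) (Fin 2) ℤ) (hdet : M.det = 1)
    (hMN : M * N = 1) (hNM : N * M = 1)
    (gM : T 2 ≃ₜ T 2) (hgM : ∀ z : E 2, gM (tpi 2 z) = tpi 2 (mulV M z))
    (lam : ℝ) (v : E 2) (hv : v ≠ 0)
    (hline : rotU (⇑F) U ⊆ lineL lam v) :
    rotU (mulV N ∘ ⇑F ∘ mulV M) (⇑gM ⁻¹' U) ⊆ mulV N '' lineL lam v ∧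
    mulV N '' lineL lam v = lineL (lam * ‖v‖ ^ 2 / ‖mulV M.transpose v‖ ^ 2) (mulV M.transpose v) ∧
    ∀ (n : ℕ) (z ρ : E 2),
      sdot v ((⇑F)^[n] z - z - (n : ℝ) • ρ) =
        sdot (mulV M.transpose v)
          ((mulV N ∘ ⇑F ∘ mulV M)^[n] (mulV N z) - mulV N z - (n : ℝ) • mulV N ρ) := by
  set vt := mulV M.transpose v with hvt
  have hMNid : ∀ z : E 2, mulV M (mulV N z) = z := fun z => by
    rw [mulV_mulV, hMN, mulV_one]
  have hNMid : ∀ z : E 2, mulV N (mulV M z) = z := fun z => by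
    rw [mulV_mulV, hNM, mulV_one]
  have hNt : mulV N.transpose vt = v := by
    rw [hvt, mulV_mulV, ← Matrix.transpose_mul, hMN, Matrix.transpose_one, mulV_one]
  have hvt0 : vt ≠ 0 := by
    intro h
    apply hv
    rw [← hNt, h]
    ext i; simp [mulV_apply]
  have hnvt : ‖vt‖ ^ 2 ≠ 0 := pow_ne_zero _ (norm_ne_zero_iff.mpr hvt0)
  have hsdN : ∀ w : E 2, sdot vt (mulV N w) = sdot v w := fun w => by
    rw [sdot_mulV, hNt]
  have hsdM : ∀ w : E 2, sdot v (mulV M w) = sdot vt w := fun w => sdot_mulV M v w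
  set G := mulV N ∘ ⇑F ∘ mulV M with hG
  have hiter : ∀ (n : ℕ) (z : E 2), G^[n] (mulV N z) = mulV N ((⇑F)^[n] z) := by
    intro n
    induction n with
    | zero => intro z; simp
    | succ k ih =>
      intro z
      rw [Function.iterate_succ_apply', Function.iterate_succ_apply', ih]
      show mulV N (F (mulV M (mulV N _))) = _
      rw [hMNid]
  have key3 : ∀ (n : ℕ) (z ρ : E 2),
      sdot v ((⇑F)^[n] z - z - (n : ℝ) • ρ) =
        sdot vt (G^[n] (mulV N z) - mulV N z - (n : ℝ) • mulV N ρ) := by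
    intro n z ρ
    rw [hiter, ← mulV_smul, ← mulV_sub, ← mulV_sub, hsdN]
  have key2 : mulV N '' lineL lam v = lineL (lam * ‖v‖ ^ 2 / ‖vt‖ ^ 2) vt := by
    ext z
    constructor
    · rintro ⟨w, hw, rfl⟩
      show sdot vt (mulV N w) = _
      rw [hsdN, hw, sdot_self, sdot_self]
      field_simp
    · intro hz
      refine ⟨mulV M z, ?_, hNMid z⟩
      show sdot v (mulV M z) = lam * sdot v v
      rw [hsdM, hz, sdot_self, sdot_self]
      field_simp
  refine ⟨?_, key2, key3⟩
  rintro ρ ⟨n, z, hn, hz, hconv⟩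
  have hmem : mulV M ρ ∈ rotU (⇑F) U := by
    refine ⟨n, fun i => mulV M (z i), hn, ?_, ?_⟩
    · intro i
      have := hz i
      simp only [mem_preimage] at this ⊢
      rwa [← hgM]
    · have hc : ∀ i, (n i : ℝ)⁻¹ • ((⇑F)^[n i] (mulV M (z i)) - mulV M (z i)) =
          mulV M ((n i : ℝ)⁻¹ • (G^[n i] (z i) - z i)) := by
        intro i
        rw [mulV_smul, mulV_sub]
        congr 2
        have := hiter (n i) (mulV M (z i))
        rw [hNMid] at this
        rw [this, hMNid]
      simp only [hc]
      exact ((mulV_cont M).tendsto ρ).comp hconv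
  have := hline hmem
  exact ⟨mulV M ρ, this, hNMid ρ⟩
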